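/- For any d×d density matrices ρ and σ, S(ρ + I ‖ σ + I) ≤ log 2. -/

import Mathlib

open Matrix MeasureTheory
open scoped ComplexOrder

theorem Matrix.IsHermitian.star_mul_self_mul_eq_diagonal {n : Type*} [Fintype n] [DecidableEq n]
    {A : Matrix n n ℂ} (hA : A.IsHermitian) :
    star (hA.eigenvectorUnitary : Matrix n n ℂ) * A * (hA.eigenvectorUnitary : Matrix n n ℂ) =
      diagonal (RCLike.ofReal ∘ hA.eigenvalues) := by
  simpa using hA.conjStarAlgAut_star_eigenvectorUnitary

namespace QREAux



variable {n : Type*} [Fintype n] [DecidableEq n]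

lemma trace_conj_mul (V X Y : Matrix n n ℂ) :
    (X * (V * Y * star V)).trace = ((star V * X * V) * Y).trace := by
  calc ((X * (V * Y * star V))).trace = (((X * V * Y) * star V)).trace := by
        simp only [Matrix.mul_assoc]
      _ = (star V * (X * V * Y)).trace := (Matrix.trace_mul_comm _ _)
      _ = ((star V * X * V) * Y).trace := by simp only [Matrix.mul_assoc]

lemma traceConj (V X : Matrix n n ℂ) (hV : V * star V = 1) :
    (star V * X * V).trace = X.trace := by
  rw [Matrix.mul_assoc, Matrix.trace_mul_comm, Matrix.mul_assoc, hV, Matrix.mul_one]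

lemma trace_mul_diag (C : Matrix n n ℂ) (w : n → ℂ) :
    (C * diagonal w).trace = ∑ j, C j j * w j := by
  simp [Matrix.trace, Matrix.diag, Matrix.mul_apply, Matrix.diagonal_apply, mul_ite,
    Finset.sum_ite_eq, Finset.sum_ite_eq']

lemma diag_re_nonneg {N : Matrix n n ℂ} (hN : N.PosSemidef) (j : n) : 0 ≤ (N j j).re := by
  exact (Complex.le_def.mp hN.diag_nonneg).1

variable {A : Matrix n n ℂ} (hA : A.IsHermitian)

lemma star_conj_cfc (f : ℝ → ℝ) :
    star (hA.eigenvectorUnitary : Matrix n n ℂ) * hA.cfc f *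
      (hA.eigenvectorUnitary : Matrix n n ℂ) =
      diagonal (Complex.ofReal ∘ f ∘ hA.eigenvalues) := by
  have h2 : star (hA.eigenvectorUnitary : Matrix n n ℂ) * hA.eigenvectorUnitary = 1 :=
    mem_unitaryGroup_iff'.mp (hA.eigenvectorUnitary).2
  rw [Matrix.IsHermitian.cfc, Unitary.conjStarAlgAut_apply]
  simp only [Matrix.mul_assoc, h2, Matrix.mul_one]
  rw [← Matrix.mul_assoc, h2, one_mul]
  rfl

lemma trace_cfc (f : ℝ → ℝ) :
    (hA.cfc f).trace = ∑ i, (f (hA.eigenvalues i) : ℂ) := by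
  have h2 : star (hA.eigenvectorUnitary : Matrix n n ℂ) * hA.eigenvectorUnitary = 1 :=
    mem_unitaryGroup_iff'.mp (hA.eigenvectorUnitary).2
  rw [Matrix.IsHermitian.cfc, Unitary.conjStarAlgAut_apply, Matrix.trace_mul_cycle, h2, one_mul, Matrix.trace_diagonal]
  rfl

lemma cfc_posSemidef (f : ℝ → ℝ) (hf : ∀ i, 0 ≤ f (hA.eigenvalues i)) :
    (hA.cfc f).PosSemidef := by
  rw [Matrix.IsHermitian.cfc, Unitary.conjStarAlgAut_apply, Matrix.star_eq_conjTranspose]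
  exact (Matrix.posSemidef_diagonal_iff.mpr fun i => by
    simpa using Complex.zero_le_real.mpr (hf i)).mul_mul_conjTranspose_same _

lemma cfc_comb (p q : ℝ) (f : ℝ → ℝ) :
    hA.cfc (fun x => p * x + q - f x) = (p : ℂ) • A + (q : ℂ) • 1 - hA.cfc f := by
  have h1 : (hA.eigenvectorUnitary : Matrix n n ℂ) * star (hA.eigenvectorUnitary : Matrix n n ℂ)
      = 1 := mem_unitaryGroup_iff.mp (hA.eigenvectorUnitary).2
  have h2 : star (hA.eigenvectorUnitary : Matrix n n ℂ) * (hA.eigenvectorUnitary : Matrix n n ℂ)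
      = 1 := mem_unitaryGroup_iff'.mp (hA.eigenvectorUnitary).2
  have e : ∀ X : Matrix n n ℂ,
      (hA.eigenvectorUnitary : Matrix n n ℂ) *
        (star (hA.eigenvectorUnitary : Matrix n n ℂ) * X *
          (hA.eigenvectorUnitary : Matrix n n ℂ)) *
        star (hA.eigenvectorUnitary : Matrix n n ℂ) = X := by
    intro X
    calc (hA.eigenvectorUnitary : Matrix n n ℂ) *
          (star (hA.eigenvectorUnitary : Matrix n n ℂ) * X *
            (hA.eigenvectorUnitary : Matrix n n ℂ)) *
          star (hA.eigenvectorUnitary : Matrix n n ℂ)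
        = ((hA.eigenvectorUnitary : Matrix n n ℂ) * star (hA.eigenvectorUnitary : Matrix n n ℂ))
            * X *
          ((hA.eigenvectorUnitary : Matrix n n ℂ) *
            star (hA.eigenvectorUnitary : Matrix n n ℂ)) := by
          simp only [Matrix.mul_assoc]
      _ = X := by rw [h1, one_mul, mul_one]
  rw [← e (hA.cfc (fun x => p * x + q - f x)), ← e ((p : ℂ) • A + (q : ℂ) • 1 - hA.cfc f)]
  congr 1
  congr 1
  rw [star_conj_cfc hA]
  simp only [Matrix.mul_sub, Matrix.sub_mul, Matrix.mul_add, Matrix.add_mul, Matrix.mul_smul,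
    Matrix.smul_mul, Matrix.mul_one]
  rw [star_conj_cfc hA, h2, hA.star_mul_self_mul_eq_diagonal]
  ext i j
  by_cases h : i = j
  · subst h
    simp [Matrix.diagonal_apply_eq, Matrix.one_apply_eq]
    try push_cast
    try ring
  · simp [Matrix.diagonal_apply_ne _ h, Matrix.one_apply_ne h]



lemma chord {x : ℝ} (h1 : 1 ≤ x) (h2 : x ≤ 2) :
    x * Real.log x ≤ (x - 1) * (2 * Real.log 2) := by
  have hc := Real.convexOn_mul_log
  have h := hc.2 (Set.mem_Ici.mpr (by norm_num : (0:ℝ) ≤ 1))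
    (Set.mem_Ici.mpr (by norm_num : (0:ℝ) ≤ 2))
    (show (0:ℝ) ≤ 2 - x by linarith) (show (0:ℝ) ≤ x - 1 by linarith)
    (show (2 - x) + (x - 1) = 1 by ring)
  simp only [smul_eq_mul] at h
  rw [show (2 - x) * 1 + (x - 1) * 2 = x by ring] at h
  rw [Real.log_one] at h
  nlinarith [h]

lemma key_scalar {x y : ℝ} (hx1 : 1 ≤ x) (hx2 : x ≤ 2) (hy1 : 1 ≤ y) (hy2 : y ≤ 2) :
    x * Real.log x - 2 * Real.log 2 * x + Real.log 2 ≤ Real.log y * x - Real.log 2 * y := by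
  have hl2 : (0:ℝ) ≤ Real.log 2 := Real.log_nonneg one_le_two
  have hch := chord hx1 hx2
  -- convexity in y of G t = x * (-(log t)) + log 2 * t
  have hsub : Set.Icc (1:ℝ) 2 ⊆ Set.Ioi 0 := fun t ht => lt_of_lt_of_le one_pos ht.1
  have hneg : ConvexOn ℝ (Set.Icc (1:ℝ) 2) (fun t => -Real.log t) :=
    ((strictConcaveOn_log_Ioi.concaveOn).subset hsub (convex_Icc _ _)).neg
  have hG : ConvexOn ℝ (Set.Icc (1:ℝ) 2)
      (fun t => x * (-Real.log t) + Real.log 2 * t) := by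
    have h1 := hneg.smul (le_trans zero_le_one hx1)
    have h2 := (convexOn_id (convex_Icc (1:ℝ) 2)).smul hl2
    exact (h1.add h2).congr fun t _ => by simp [smul_eq_mul]
  have hmem : y ∈ segment ℝ (1:ℝ) 2 := by
    rw [segment_eq_Icc (by norm_num : (1:ℝ) ≤ 2)]
    exact ⟨hy1, hy2⟩
  have hmax := hG.le_on_segment (Set.mem_Icc.mpr ⟨le_refl 1, by norm_num⟩)
    (Set.mem_Icc.mpr ⟨by norm_num, le_refl 2⟩) hmem
  rcases le_max_iff.mp hmax with h | h
  · simp only [Real.log_one, neg_zero, mul_zero, mul_one, zero_add] at h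
    -- h : x * (-log y) + log 2 * y ≤ log 2
    nlinarith [h]
  · simp only [mul_neg] at h
    -- h : -(x * log y) + log 2 * y ≤ -(x * log 2) + log 2 * 2
    nlinarith [h]




variable {n : Type*} [Fintype n] [DecidableEq n]

lemma rcOfReal (r : ℝ) : (RCLike.ofReal r : ℂ) = Complex.ofReal r := rfl

variable {A : Matrix n n ℂ} (hA : A.IsHermitian)

lemma cfc_zero : hA.cfc (fun _ => (0:ℝ)) = 0 := by
  rw [Matrix.IsHermitian.cfc, Unitary.conjStarAlgAut_apply]
  have : diagonal ((RCLike.ofReal : ℝ → ℂ) ∘ (fun _ => (0:ℝ)) ∘ hA.eigenvalues) = 0 := by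
    ext i j
    by_cases h : i = j
    · subst h; simp
    · simp [Matrix.diagonal_apply_ne _ h]
  rw [this, Matrix.mul_zero, Matrix.zero_mul]

lemma eig_facts {ρ : Matrix n n ℂ} (hρ : ρ.PosSemidef) (hρ1 : ρ.trace = 1)
    (hA : (ρ + 1).IsHermitian) :
    (∀ i, 1 ≤ hA.eigenvalues i) ∧ (∀ i, hA.eigenvalues i ≤ 2) ∧
      ∑ i, hA.eigenvalues i = 1 + (Fintype.card n : ℝ) := by
  have hcfc : hA.cfc (fun x => 1 * x + (-1) - (fun _ : ℝ => (0:ℝ)) x) = ρ := by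
    rw [cfc_comb hA 1 (-1) (fun _ => (0:ℝ)), cfc_zero hA]
    simp only [Complex.ofReal_one, Complex.ofReal_neg, one_smul, neg_smul, sub_zero]
    abel
  have hU1 : (hA.eigenvectorUnitary : Matrix n n ℂ) *
      star (hA.eigenvectorUnitary : Matrix n n ℂ) = 1 :=
    mem_unitaryGroup_iff.mp (hA.eigenvectorUnitary).2
  have hD : (star (hA.eigenvectorUnitary : Matrix n n ℂ) * ρ *
      (hA.eigenvectorUnitary : Matrix n n ℂ)).PosSemidef := by
    rw [Matrix.star_eq_conjTranspose]
    exact hρ.conjTranspose_mul_mul_same _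
  have hDtr : (star (hA.eigenvectorUnitary : Matrix n n ℂ) * ρ *
      (hA.eigenvectorUnitary : Matrix n n ℂ)).trace = 1 := by
    rw [traceConj _ _ hU1, hρ1]
  have hDdiag : star (hA.eigenvectorUnitary : Matrix n n ℂ) * ρ *
      (hA.eigenvectorUnitary : Matrix n n ℂ) =
      diagonal (Complex.ofReal ∘ (fun x => 1 * x + (-1) - (fun _ : ℝ => (0:ℝ)) x) ∘
        hA.eigenvalues) := by
    have h := star_conj_cfc hA (fun x => 1 * x + (-1) - (fun _ : ℝ => (0:ℝ)) x)
    rw [hcfc] at h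
    exact h
  rw [hDdiag] at hD hDtr
  have hlow : ∀ i, 1 ≤ hA.eigenvalues i := by
    intro i
    have h := diag_re_nonneg hD i
    simp only [Matrix.diagonal_apply_eq, Function.comp_apply, rcOfReal, Complex.ofReal_re] at h
    linarith
  have htr : ∑ i, (hA.eigenvalues i - 1) = 1 := by
    rw [Matrix.trace_diagonal] at hDtr
    have h2 : ((∑ i, (hA.eigenvalues i - 1) : ℝ) : ℂ) = 1 := by
      rw [Complex.ofReal_sum]
      rw [← hDtr]
      refine Finset.sum_congr rfl fun i _ => ?_
      simp only [Function.comp_apply]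
      push_cast
      ring
    exact_mod_cast h2
  have hsum : ∑ i, hA.eigenvalues i = 1 + (Fintype.card n : ℝ) := by
    rw [Finset.sum_sub_distrib, Finset.sum_const, Finset.card_univ, nsmul_eq_mul,
      mul_one] at htr
    linarith
  refine ⟨hlow, fun i => ?_, hsum⟩
  have hcard : 1 ≤ Fintype.card n := Fintype.card_pos_iff.mpr ⟨i⟩
  have hsplit := Finset.add_sum_erase Finset.univ hA.eigenvalues (Finset.mem_univ i)
  have hge := Finset.card_nsmul_le_sum (Finset.univ.erase i) hA.eigenvalues 1
    (fun k _ => hlow k)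
  rw [Finset.card_erase_of_mem (Finset.mem_univ i), Finset.card_univ, nsmul_eq_mul,
    mul_one] at hge
  have hcast : ((Fintype.card n - 1 : ℕ) : ℝ) = (Fintype.card n : ℝ) - 1 := by
    push_cast [Nat.cast_sub hcard]
    ring
  rw [hcast] at hge
  rw [← hsplit] at hsum
  linarith


noncomputable def mfun : ℝ → ℝ := fun x => x * Real.log x - 2 * Real.log 2 * x + Real.log 2

end QREAux

/-- Matrix logarithm on the support: apply `Real.log` (which is `0` at `0`) to the
eigenvalues of a Hermitian matrix via functional calculus; junk value `0` otherwise. -/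
noncomputable def mlog {n : Type*} [Fintype n] [DecidableEq n] (A : Matrix n n ℂ) :
    Matrix n n ℂ :=
  if hA : A.IsHermitian then hA.cfc Real.log else 0

/-- Quantum relative entropy `S(A‖B) = Tr A (log A - log B)`. -/
noncomputable def qRelEnt {n : Type*} [Fintype n] [DecidableEq n] (A B : Matrix n n ℂ) : ℝ :=
  ((A * (mlog A - mlog B)).trace).re

/-- The square root of a positive semidefinite matrix (as in the older Mathlib). -/
noncomputable def Matrix.PosSemidef.sqrt {n : Type*} [Fintype n] [DecidableEq n] {A : Matrix n n ℂ}
    (hA : A.PosSemidef) : Matrix n n ℂ :=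
  hA.1.eigenvectorUnitary.1 * diagonal ((↑) ∘ (√·) ∘ hA.1.eigenvalues) *
  (star hA.1.eigenvectorUnitary : Matrix n n ℂ)

theorem Matrix.PosSemidef.posSemidef_sqrt {n : Type*} [Fintype n] [DecidableEq n]
    {A : Matrix n n ℂ} (hA : A.PosSemidef) : PosSemidef hA.sqrt := by
  unfold Matrix.PosSemidef.sqrt
  refine (PosSemidef.diagonal (fun i => ?_)).mul_mul_conjTranspose_same _
  simp only [Function.comp_apply, Pi.zero_apply, Complex.zero_le_real]
  exact Real.sqrt_nonneg _

/-- Trace norm `‖X‖₁ = Tr √(Xᴴ X)`. -/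
noncomputable def traceNorm {n : Type*} [Fintype n] [DecidableEq n] (X : Matrix n n ℂ) : ℝ :=
  ((Matrix.posSemidef_conjTranspose_mul_self X).sqrt.trace).re

/-- Smallest eigenvalue of a Hermitian matrix (junk value `0` otherwise). -/
noncomputable def lamMin {n : Type*} [Fintype n] [DecidableEq n] (A : Matrix n n ℂ) : ℝ :=
  if hA : A.IsHermitian then ⨅ i, hA.eigenvalues i else 0

/-- Largest eigenvalue of a Hermitian matrix (junk value `0` otherwise). -/
noncomputable def lamMax {n : Type*} [Fintype n] [DecidableEq n] (A : Matrix n n ℂ) : ℝ :=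
  if hA : A.IsHermitian then ⨆ i, hA.eigenvalues i else 0

/-- Operator norm: largest eigenvalue of `√(Xᴴ X)` (largest singular value). -/
noncomputable def opNorm {n : Type*} [Fintype n] [DecidableEq n] (X : Matrix n n ℂ) : ℝ :=
  ⨆ i, (Matrix.posSemidef_conjTranspose_mul_self X).posSemidef_sqrt.1.eigenvalues i

/-- The regularised relative entropy (before normalisation) is at most `log 2`. -/
theorem regRelEntropy_le_log_two {d : ℕ} (ρ σ : Matrix (Fin d) (Fin d) ℂ)
    (hρ : ρ.PosSemidef) (hρ1 : ρ.trace = 1)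
    (hσ : σ.PosSemidef) (hσ1 : σ.trace = 1) :
    qRelEnt (ρ + 1) (σ + 1) ≤ Real.log 2 := by
  have hA : (ρ + 1).IsHermitian := hρ.1.add Matrix.isHermitian_one
  have hB : (σ + 1).IsHermitian := hσ.1.add Matrix.isHermitian_one
  obtain ⟨ha1, ha2, hasum⟩ := QREAux.eig_facts hρ hρ1 hA
  obtain ⟨hb1, hb2, hbsum⟩ := QREAux.eig_facts hσ hσ1 hB
  rw [Fintype.card_fin] at hasum hbsum
  have hV1 : (hB.eigenvectorUnitary : Matrix (Fin d) (Fin d) ℂ) * star (hB.eigenvectorUnitary : Matrix (Fin d) (Fin d) ℂ) = 1 := mem_unitaryGroup_iff.mp (hB.eigenvectorUnitary).2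
  have hV2 : star (hB.eigenvectorUnitary : Matrix (Fin d) (Fin d) ℂ) * (hB.eigenvectorUnitary : Matrix (Fin d) (Fin d) ℂ) = 1 := mem_unitaryGroup_iff'.mp (hB.eigenvectorUnitary).2
  have hm1 : mlog (ρ + 1) = hA.cfc Real.log := by unfold mlog; rw [dif_pos hA]
  have hm2 : mlog (σ + 1) = hB.cfc Real.log := by unfold mlog; rw [dif_pos hB]
  have hT1 : ((ρ + 1) * hA.cfc Real.log).trace.re
      = ∑ i, hA.eigenvalues i * Real.log (hA.eigenvalues i) := by
    rw [Matrix.IsHermitian.cfc, Unitary.conjStarAlgAut_apply, QREAux.trace_conj_mul, hA.star_mul_self_mul_eq_diagonal,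
      Matrix.diagonal_mul_diagonal, Matrix.trace_diagonal, Complex.re_sum]
    refine Finset.sum_congr rfl fun i _ => ?_
    simp [QREAux.rcOfReal, Function.comp_apply, ← Complex.ofReal_mul]
  have hT2 : ((ρ + 1) * hB.cfc Real.log).trace.re
      = ∑ j, ((star (hB.eigenvectorUnitary : Matrix (Fin d) (Fin d) ℂ) * (ρ + 1) * (hB.eigenvectorUnitary : Matrix (Fin d) (Fin d) ℂ)) j j).re * Real.log (hB.eigenvalues j) := by
    rw [Matrix.IsHermitian.cfc, Unitary.conjStarAlgAut_apply, QREAux.trace_conj_mul, QREAux.trace_mul_diag, Complex.re_sum]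
    refine Finset.sum_congr rfl fun j _ => ?_
    simp [QREAux.rcOfReal, Function.comp_apply, Complex.mul_re, Complex.ofReal_re,
      Complex.ofReal_im]
  have hCtr : ∑ j, ((star (hB.eigenvectorUnitary : Matrix (Fin d) (Fin d) ℂ) * (ρ + 1) * (hB.eigenvectorUnitary : Matrix (Fin d) (Fin d) ℂ)) j j).re = 1 + (d : ℝ) := by
    have h := QREAux.traceConj (hB.eigenvectorUnitary : Matrix (Fin d) (Fin d) ℂ) (ρ + 1) hV1
    have h2 : ((ρ : Matrix (Fin d) (Fin d) ℂ) + 1).trace = (1 + d : ℂ) := by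
      rw [Matrix.trace_add, hρ1, Matrix.trace_one]
      push_cast [Fintype.card_fin]
      ring
    rw [h2] at h
    calc ∑ j, ((star (hB.eigenvectorUnitary : Matrix (Fin d) (Fin d) ℂ) * (ρ + 1) * (hB.eigenvectorUnitary : Matrix (Fin d) (Fin d) ℂ)) j j).re
        = ((star (hB.eigenvectorUnitary : Matrix (Fin d) (Fin d) ℂ) * (ρ + 1) * (hB.eigenvectorUnitary : Matrix (Fin d) (Fin d) ℂ)).trace).re := (Complex.re_sum _ _).symm
      _ = 1 + (d : ℝ) := by rw [h]; simp
  have hperj : ∀ j, ((star (hB.eigenvectorUnitary : Matrix (Fin d) (Fin d) ℂ) * hA.cfc QREAux.mfun * (hB.eigenvectorUnitary : Matrix (Fin d) (Fin d) ℂ)) j j).re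
      ≤ Real.log (hB.eigenvalues j) * ((star (hB.eigenvectorUnitary : Matrix (Fin d) (Fin d) ℂ) * (ρ + 1) * (hB.eigenvectorUnitary : Matrix (Fin d) (Fin d) ℂ)) j j).re
        - Real.log 2 * hB.eigenvalues j := by
    intro j
    have hW : (hA.cfc (fun x => Real.log (hB.eigenvalues j) * x
        + (-(Real.log 2 * hB.eigenvalues j)) - QREAux.mfun x)).PosSemidef := by
      apply QREAux.cfc_posSemidef
      intro i
      have hk := QREAux.key_scalar (ha1 i) (ha2 i) (hb1 j) (hb2 j)
      simp only [QREAux.mfun]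
      linarith
    have hN : (star (hB.eigenvectorUnitary : Matrix (Fin d) (Fin d) ℂ) * hA.cfc (fun x => Real.log (hB.eigenvalues j) * x
        + (-(Real.log 2 * hB.eigenvalues j)) - QREAux.mfun x) * (hB.eigenvectorUnitary : Matrix (Fin d) (Fin d) ℂ)).PosSemidef := by
      rw [Matrix.star_eq_conjTranspose]
      exact hW.conjTranspose_mul_mul_same _
    have h0 := QREAux.diag_re_nonneg hN j
    rw [QREAux.cfc_comb hA] at h0
    have hdist : star (hB.eigenvectorUnitary : Matrix (Fin d) (Fin d) ℂ) * (((Real.log (hB.eigenvalues j) : ℝ) : ℂ) • (ρ + 1)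
          + ((-(Real.log 2 * hB.eigenvalues j) : ℝ) : ℂ) • 1 - hA.cfc QREAux.mfun) * (hB.eigenvectorUnitary : Matrix (Fin d) (Fin d) ℂ)
        = ((Real.log (hB.eigenvalues j) : ℝ) : ℂ) • (star (hB.eigenvectorUnitary : Matrix (Fin d) (Fin d) ℂ) * (ρ + 1) * (hB.eigenvectorUnitary : Matrix (Fin d) (Fin d) ℂ))
          + ((-(Real.log 2 * hB.eigenvalues j) : ℝ) : ℂ) • 1
          - star (hB.eigenvectorUnitary : Matrix (Fin d) (Fin d) ℂ) * hA.cfc QREAux.mfun * (hB.eigenvectorUnitary : Matrix (Fin d) (Fin d) ℂ) := by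
      simp only [Matrix.mul_add, Matrix.add_mul, Matrix.mul_sub, Matrix.sub_mul,
        Matrix.mul_smul, Matrix.smul_mul, Matrix.mul_one, hV2]
    rw [hdist] at h0
    simp only [Matrix.sub_apply, Matrix.add_apply, Matrix.smul_apply, Matrix.one_apply_eq,
      smul_eq_mul, Complex.sub_re, Complex.add_re, Complex.mul_re, Complex.ofReal_re,
      Complex.ofReal_im, Complex.one_re, Complex.one_im, mul_zero, mul_one, zero_mul,
      sub_zero, zero_sub] at h0
    linarith
  have hMsum : ∑ j, ((star (hB.eigenvectorUnitary : Matrix (Fin d) (Fin d) ℂ) * hA.cfc QREAux.mfun * (hB.eigenvectorUnitary : Matrix (Fin d) (Fin d) ℂ)) j j).re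
      = ∑ i, QREAux.mfun (hA.eigenvalues i) := by
    have h := QREAux.traceConj (hB.eigenvectorUnitary : Matrix (Fin d) (Fin d) ℂ) (hA.cfc QREAux.mfun) hV1
    rw [QREAux.trace_cfc] at h
    calc ∑ j, ((star (hB.eigenvectorUnitary : Matrix (Fin d) (Fin d) ℂ) * hA.cfc QREAux.mfun * (hB.eigenvectorUnitary : Matrix (Fin d) (Fin d) ℂ)) j j).re
        = ((star (hB.eigenvectorUnitary : Matrix (Fin d) (Fin d) ℂ) * hA.cfc QREAux.mfun * (hB.eigenvectorUnitary : Matrix (Fin d) (Fin d) ℂ)).trace).re := (Complex.re_sum _ _).symm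
      _ = (∑ i, ((QREAux.mfun (hA.eigenvalues i) : ℝ) : ℂ)).re := by rw [h]
      _ = ∑ i, QREAux.mfun (hA.eigenvalues i) := by
          rw [Complex.re_sum]
          exact Finset.sum_congr rfl fun i _ => Complex.ofReal_re _
  have hsum_le := Finset.sum_le_sum fun j (_ : j ∈ Finset.univ) => hperj j
  rw [hMsum] at hsum_le
  have hL : ∑ i, QREAux.mfun (hA.eigenvalues i)
      = (∑ i, hA.eigenvalues i * Real.log (hA.eigenvalues i))
        - 2 * Real.log 2 * (1 + d) + d * Real.log 2 := by
    simp only [QREAux.mfun]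
    rw [Finset.sum_add_distrib, Finset.sum_sub_distrib, ← Finset.mul_sum, hasum,
      Finset.sum_const, Finset.card_univ, Fintype.card_fin, nsmul_eq_mul]
    try ring
  have hR : ∑ j, (Real.log (hB.eigenvalues j) * ((star (hB.eigenvectorUnitary : Matrix (Fin d) (Fin d) ℂ) * (ρ + 1) * (hB.eigenvectorUnitary : Matrix (Fin d) (Fin d) ℂ)) j j).re
        - Real.log 2 * hB.eigenvalues j)
      = (∑ j, ((star (hB.eigenvectorUnitary : Matrix (Fin d) (Fin d) ℂ) * (ρ + 1) * (hB.eigenvectorUnitary : Matrix (Fin d) (Fin d) ℂ)) j j).re * Real.log (hB.eigenvalues j))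
        - Real.log 2 * (1 + d) := by
    rw [Finset.sum_sub_distrib, ← Finset.mul_sum, hbsum]
    exact congrArg₂ _ (Finset.sum_congr rfl fun j _ => mul_comm _ _) rfl
  rw [hL, hR] at hsum_le
  unfold qRelEnt
  rw [hm1, hm2, Matrix.mul_sub, Matrix.trace_sub, Complex.sub_re, hT1, hT2]
  linarith
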